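/- Under the DSMT setup, if the stepsize satisfies α ≤ (1−β)/(3βL), then for every k ≥ 0: E[f(x̄_k) − f^*] ≤ E[f(d̄_k) − f^*] + (αβ/(1−β)) E[‖∇f(x̄_k)‖²] + (αβ/(1−β)) E[‖z̄_{k−1}‖²]. -/

import Mathlib

open MeasureTheory Matrix Finset ProbabilityTheory

noncomputable section

/-- Points live in `ℝ^p` (Euclidean space). -/
abbrev Vec (p : ℕ) := EuclideanSpace ℝ (Fin p)

/-- A stacked variable: one row (point of `ℝ^p`) per agent. -/
abbrev Stacked (n p : ℕ) := Fin n → Vec p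

/-- Average of the rows of a stacked variable. -/
def rowAvg {n p : ℕ} (X : Stacked n p) : Vec p := (n : ℝ)⁻¹ • ∑ i, X i

/-- Squared Frobenius norm of a stacked variable. -/
def fro2 {n p : ℕ} (X : Stacked n p) : ℝ := ∑ i, ‖X i‖ ^ 2

/-- Consensus error `Π X`: row `i` is `Xᵢ − X̄`. -/
def consErr {n p : ℕ} (X : Stacked n p) : Stacked n p := fun i => X i - rowAvg X

/-- A matrix acting on a stacked variable. -/
def mulStacked {n p : ℕ} (M : Matrix (Fin n) (Fin n) ℝ) (X : Stacked n p) : Stacked n p :=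
  fun i => ∑ j, M i j • X j

/-- Application of the augmented matrix `W̃ = [[(1+η)W, −ηI], [I, 0]]` to an augmented
stacked variable `(top block, bottom block)`. -/
def lcaMul {n p : ℕ} (W : Matrix (Fin n) (Fin n) ℝ) (ηw : ℝ)
    (X : Stacked n p × Stacked n p) : Stacked n p × Stacked n p :=
  ((1 + ηw) • mulStacked W X.1 - ηw • X.2, X.1)

/-- Squared Frobenius norm of an augmented stacked variable. -/
def afro2 {n p : ℕ} (X : Stacked n p × Stacked n p) : ℝ := fro2 X.1 + fro2 X.2

/-- The augmented consensus operator `Π̃ = diag(Π, Π)`. -/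
def aconsErr {n p : ℕ} (X : Stacked n p × Stacked n p) : Stacked n p × Stacked n p :=
  (consErr X.1, consErr X.2)

/-- Spectral norm (ℓ₂ operator norm) of a real matrix. -/
def specNorm {n : ℕ} (M : Matrix (Fin n) (Fin n) ℝ) : ℝ :=
  ‖LinearMap.toContinuousLinearMap (Matrix.toEuclideanLin M)‖

/-- The matrix `(1/n) 𝟙𝟙ᵀ` with all entries `1/n`. -/
def avgMatrix (n : ℕ) : Matrix (Fin n) (Fin n) ℝ := Matrix.of fun _ _ => (n : ℝ)⁻¹

/-- The full Distributed Stochastic Momentum Tracking (DSMT) setup: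
`L`-smooth lower-bounded local objectives, a symmetric doubly stochastic mixing
matrix with spectral gap, the pathwise DSMT recursions driven by stochastic
gradients satisfying the ABC variance condition with respect to a filtration,
independently across agents. -/
structure DSMT (n p : ℕ) (Ω : Type) [mΩ : MeasurableSpace Ω] [StandardBorelSpace Ω]
    (μ : Measure Ω) [IsProbabilityMeasure μ] where
  /-- smoothness constant -/
  L : ℝ
  /-- ABC condition constant -/
  C : ℝ
  /-- ABC condition noise level -/
  sig : ℝ
  /-- local objective functions -/
  f : Fin n → Vec p → ℝ
  /-- infima of the local objectives -/
  fStar : Fin n → ℝ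
  /-- mixing matrix -/
  W : Matrix (Fin n) (Fin n) ℝ
  /-- spectral norm of `W − (1/n)𝟙𝟙ᵀ` -/
  lam : ℝ
  /-- LCA parameter `η_w` -/
  ηw : ℝ
  /-- the filtration generated by the samples -/
  ℱ : Filtration ℕ mΩ
  /-- stepsize -/
  α : ℝ
  /-- momentum parameter -/
  β : ℝ
  /-- augmented iterates `x̃`, `ỹ` and the iterates `x`, `y`, `z`, `g` -/
  xt : ℕ → Ω → Stacked n p × Stacked n p
  yt : ℕ → Ω → Stacked n p × Stacked n p
  x : ℕ → Ω → Stacked n p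
  y : ℕ → Ω → Stacked n p
  z : ℕ → Ω → Stacked n p
  g : ℕ → Ω → Stacked n p
  /-- the (deterministic) initial point -/
  x0 : Stacked n p
  hn : 0 < n
  hp : 0 < p
  hL : 0 < L
  hC : 0 ≤ C
  hsig : 0 ≤ sig
  hα : 0 < α
  hβ0 : 0 < β
  hβ1 : β < 1
  hdiff : ∀ i, Differentiable ℝ (f i)
  hsmooth : ∀ i v v', ‖gradient (f i) v - gradient (f i) v'‖ ≤ L * ‖v - v'‖
  hfStar : ∀ i, IsGLB (Set.range (f i)) (fStar i)
  hWsymm : W.IsSymm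
  hWnonneg : ∀ i j, 0 ≤ W i j
  hWdiag : ∀ i, 0 < W i i
  hWrow : ∀ i, ∑ j, W i j = 1
  hWcol : ∀ j, ∑ i, W i j = 1
  hlamdef : lam = specNorm (W - avgMatrix n)
  hlam1 : lam < 1
  hηw : ηw = 1 / (1 + Real.sqrt (1 - lam ^ 2))
  hx : ∀ k ω, x k ω = (xt k ω).1
  hy : ∀ k ω, y k ω = (yt k ω).1
  hxt : ∀ k ω, xt (k + 1) ω =
    lcaMul W ηw ((xt k ω).1 - α • y k ω, (xt k ω).2 - α • y k ω)
  hz : ∀ k ω, z (k + 1) ω = β • z k ω + (1 - β) • g (k + 1) ω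
  hyt : ∀ k ω, yt (k + 1) ω =
    lcaMul W ηw ((yt k ω).1 + z (k + 1) ω - z k ω, (yt k ω).2 + z (k + 1) ω - z k ω)
  hx0 : ∀ ω, x 0 ω = x0
  hxt0 : ∀ ω, (xt 0 ω).2 = (xt 0 ω).1
  hz0 : ∀ ω, z 0 ω = (1 - β) • g 0 ω
  hy0 : ∀ ω, y 0 ω = z 0 ω
  hyt0 : ∀ ω, (yt 0 ω).2 = (yt 0 ω).1
  hx_adapted : ∀ k, StronglyMeasurable[ℱ k] (x k)
  hg_meas : ∀ k, StronglyMeasurable[ℱ (k + 1)] (g k)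
  hx_L2 : ∀ k i, MemLp (fun ω => x k ω i) 2 μ
  hg_L2 : ∀ k i, MemLp (fun ω => g k ω i) 2 μ
  habc_mean : ∀ k i,
    μ[(fun ω => g k ω i) | ℱ k] =ᵐ[μ] fun ω => gradient (f i) (x k ω i)
  habc_var : ∀ k i,
    μ[(fun ω => ‖g k ω i - gradient (f i) (x k ω i)‖ ^ 2) | ℱ k]
      ≤ᵐ[μ] fun ω => C * (f i (x k ω i) - fStar i) + sig ^ 2
  hindep : ∀ k, iCondIndepFun (ℱ k) (ℱ.le k)
    (fun i ω => g k ω i - gradient (f i) (x k ω i)) μ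

namespace DSMT

variable {n p : ℕ} {Ω : Type} [mΩ : MeasurableSpace Ω] [StandardBorelSpace Ω]
  {μ : Measure Ω} [IsProbabilityMeasure μ]

/-- `ρ̃_w := √η_w`. -/
def ρw (S : DSMT n p Ω μ) : ℝ := Real.sqrt S.ηw

/-- The aggregate objective `f = (1/n) ∑ᵢ fᵢ`. -/
def F (S : DSMT n p Ω μ) : Vec p → ℝ := fun v => (n : ℝ)⁻¹ * ∑ i, S.f i v

/-- `f* := inf f`. -/
def Fstar (S : DSMT n p Ω μ) : ℝ := sInf (Set.range S.F)

/-- `σ_f^* := f^* − (1/n) ∑ᵢ fᵢ^*`. -/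
def sigf (S : DSMT n p Ω μ) : ℝ := S.Fstar - (n : ℝ)⁻¹ * ∑ i, S.fStar i

/-- The averaged iterate `x̄ₖ`. -/
def xbar (S : DSMT n p Ω μ) (k : ℕ) (ω : Ω) : Vec p := rowAvg (S.x k ω)

/-- The shifted momentum `z_{k−1}` with `z_{−1} := 0`. -/
def zm (S : DSMT n p Ω μ) : ℕ → Ω → Stacked n p
  | 0 => fun _ => 0
  | (k + 1) => S.z k

/-- The shifted iterate `x_{k−1}` with `x_{−1} := x₀`. -/
def xm (S : DSMT n p Ω μ) : ℕ → Ω → Stacked n p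
  | 0 => S.x 0
  | (k + 1) => S.x k

/-- The auxiliary averages `d̄ₖ`. -/
def dbar (S : DSMT n p Ω μ) : ℕ → Ω → Vec p
  | 0 => fun ω => rowAvg (S.x 0 ω)
  | (k + 1) => fun ω =>
      (1 / (1 - S.β)) • rowAvg (S.x (k + 1) ω) - (S.β / (1 - S.β)) • rowAvg (S.x k ω)

/-- `E[f(x̄ₖ) − f^*]`. -/
def Efx (S : DSMT n p Ω μ) (k : ℕ) : ℝ := ∫ ω, (S.F (S.xbar k ω) - S.Fstar) ∂μ

/-- `E[f(d̄ₖ) − f^*]`. -/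
def Efd (S : DSMT n p Ω μ) (k : ℕ) : ℝ := ∫ ω, (S.F (S.dbar k ω) - S.Fstar) ∂μ

/-- `E[‖∇f(x̄ₖ)‖²]`. -/
def Egrad (S : DSMT n p Ω μ) (k : ℕ) : ℝ := ∫ ω, ‖gradient S.F (S.xbar k ω)‖ ^ 2 ∂μ

/-- `E[‖z̄ₖ‖²]`. -/
def Ez (S : DSMT n p Ω μ) (k : ℕ) : ℝ := ∫ ω, ‖rowAvg (S.z k ω)‖ ^ 2 ∂μ

/-- `E[‖z̄_{k−1}‖²]` (with `z_{−1} := 0`). -/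
def Ezm (S : DSMT n p Ω μ) (k : ℕ) : ℝ := ∫ ω, ‖rowAvg (S.zm k ω)‖ ^ 2 ∂μ

/-- `E[‖Π xₖ‖²]`. -/
def EconsX (S : DSMT n p Ω μ) (k : ℕ) : ℝ := ∫ ω, fro2 (consErr (S.x k ω)) ∂μ

/-- `E[‖Π yₖ‖²]`. -/
def EconsY (S : DSMT n p Ω μ) (k : ℕ) : ℝ := ∫ ω, fro2 (consErr (S.y k ω)) ∂μ

/-- `E[‖Π̃ x̃ₖ‖²]`. -/
def EconsXt (S : DSMT n p Ω μ) (k : ℕ) : ℝ := ∫ ω, afro2 (aconsErr (S.xt k ω)) ∂μ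

/-- `E[‖Π̃ ỹₖ‖²]`. -/
def EconsYt (S : DSMT n p Ω μ) (k : ℕ) : ℝ := ∫ ω, afro2 (aconsErr (S.yt k ω)) ∂μ

/-- `E[‖zₖ − ∇F(𝟙x̄ₖᵀ)‖²]`. -/
def Etrack (S : DSMT n p Ω μ) (k : ℕ) : ℝ :=
  ∫ ω, fro2 (fun i => S.z k ω i - gradient (S.f i) (S.xbar k ω)) ∂μ

/-- `E[‖z_{k−1} − ∇F(𝟙x̄_{k−1}ᵀ)‖²]` (with `z_{−1} := 0`, `x_{−1} := x₀`). -/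
def Etrackm (S : DSMT n p Ω μ) (k : ℕ) : ℝ :=
  ∫ ω, fro2 (fun i => S.zm k ω i - gradient (S.f i) (rowAvg (S.xm k ω))) ∂μ

/-- `Δ₀ := f(x̄₀) − f^*`. -/
def Δ0 (S : DSMT n p Ω μ) : ℝ := S.F (rowAvg S.x0) - S.Fstar

/-- `∑ᵢ ‖∇fᵢ(x̄₀)‖²`. -/
def gradSum0 (S : DSMT n p Ω μ) : ℝ := ∑ i, ‖gradient (S.f i) (rowAvg S.x0)‖ ^ 2

/-- `(1/n) ∑ᵢ E[f(x_{i,k}) − f^*]`. -/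
def EfAgents (S : DSMT n p Ω μ) (k : ℕ) : ℝ :=
  (n : ℝ)⁻¹ * ∑ i, ∫ ω, (S.F (S.x k ω i) - S.Fstar) ∂μ

end DSMT

/-! ### Auxiliary lemmas -/


section AuxSmooth

variable {E : Type*} [NormedAddCommGroup E] [InnerProductSpace ℝ E] [CompleteSpace E]

lemma fderiv_eq_toDual_gradient {f : E → ℝ} (hf : Differentiable ℝ f) (z : E) :
    fderiv ℝ f z = InnerProductSpace.toDual ℝ E (gradient f z) :=
  ((hf z).hasGradientAt.hasFDerivAt).fderiv

lemma quad_upper {f : E → ℝ} {L : ℝ} (hL : 0 ≤ L) (hf : Differentiable ℝ f)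
    (hlip : ∀ a b, ‖gradient f a - gradient f b‖ ≤ L * ‖a - b‖) (x y : E) :
    |f y - f x - inner (𝕜 := ℝ) (gradient f x) (y - x)| ≤ L * ‖y - x‖ ^ 2 := by
  have key : ‖f y - f x - (fderiv ℝ f x) (y - x)‖ ≤ (L * ‖y - x‖) * ‖y - x‖ := by
    refine (convex_segment x y).norm_image_sub_le_of_norm_fderiv_le'
      (fun z _ => (hf z)) (fun z hz => ?_) (left_mem_segment ℝ x y) (right_mem_segment ℝ x y)
    rw [fderiv_eq_toDual_gradient hf, fderiv_eq_toDual_gradient hf, ← map_sub,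
      LinearIsometryEquiv.norm_map]
    obtain ⟨a, b, ha, hb, hab, rfl⟩ := hz
    have hz' : a • x + b • y - x = b • (y - x) := by
      have haa : a = 1 - b := by linarith
      rw [haa]; module
    calc ‖gradient f (a • x + b • y) - gradient f x‖ ≤ L * ‖a • x + b • y - x‖ := hlip _ _
      _ = L * (b * ‖y - x‖) := by
          rw [hz', norm_smul, Real.norm_eq_abs, abs_of_nonneg hb]
      _ ≤ L * ‖y - x‖ := by
          have hb1 : b ≤ 1 := by linarith
          have : b * ‖y - x‖ ≤ ‖y - x‖ := by nlinarith [norm_nonneg (y - x)]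
          exact mul_le_mul_of_nonneg_left this hL
  rw [fderiv_eq_toDual_gradient hf, InnerProductSpace.toDual_apply_apply] at key
  calc |f y - f x - inner (𝕜 := ℝ) (gradient f x) (y - x)|
      = ‖f y - f x - inner (𝕜 := ℝ) (gradient f x) (y - x)‖ := (Real.norm_eq_abs _).symm
    _ ≤ (L * ‖y - x‖) * ‖y - x‖ := key
    _ = L * ‖y - x‖ ^ 2 := by ring

lemma grad_cont {f : E → ℝ} {L : ℝ} (hL : 0 ≤ L)
    (hlip : ∀ a b, ‖gradient f a - gradient f b‖ ≤ L * ‖a - b‖) :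
    Continuous (fun u => gradient f u) := by
  refine (LipschitzWith.of_dist_le_mul (K := L.toNNReal) fun a b => ?_).continuous
  rw [dist_eq_norm, dist_eq_norm, Real.coe_toNNReal L hL]
  exact hlip a b

end AuxSmooth

section AuxRowAvg

variable {n p : ℕ}

lemma rowAvg_add (X Y : Stacked n p) : rowAvg (X + Y) = rowAvg X + rowAvg Y := by
  simp [rowAvg, Finset.sum_add_distrib, smul_add]

lemma rowAvg_sub (X Y : Stacked n p) : rowAvg (X - Y) = rowAvg X - rowAvg Y := by
  simp [rowAvg, Finset.sum_sub_distrib, smul_sub]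

lemma rowAvg_smul (c : ℝ) (X : Stacked n p) : rowAvg (c • X) = c • rowAvg X := by
  simp only [rowAvg, Pi.smul_apply, ← Finset.smul_sum]
  rw [smul_comm]

lemma rowAvg_zero : rowAvg (0 : Stacked n p) = 0 := by simp [rowAvg]

lemma rowAvg_mulStacked {W : Matrix (Fin n) (Fin n) ℝ} (hcol : ∀ j, ∑ i, W i j = 1)
    (X : Stacked n p) : rowAvg (mulStacked W X) = rowAvg X := by
  unfold rowAvg mulStacked
  congr 1
  calc (∑ i, ∑ j, W i j • X j) = ∑ j, ∑ i, W i j • X j := Finset.sum_comm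
    _ = ∑ j, (∑ i, W i j) • X j := by simp [Finset.sum_smul]
    _ = ∑ j, X j := by simp [hcol]

lemma rowAvg_lca1 {W : Matrix (Fin n) (Fin n) ℝ} (hcol : ∀ j, ∑ i, W i j = 1)
    (η : ℝ) (A B : Stacked n p) :
    rowAvg ((lcaMul W η (A, B)).1) = (1 + η) • rowAvg A - η • rowAvg B := by
  show rowAvg ((1 + η) • mulStacked W A - η • B) = _
  rw [rowAvg_sub, rowAvg_smul, rowAvg_smul, rowAvg_mulStacked hcol]

lemma rowAvg_lca1' {W : Matrix (Fin n) (Fin n) ℝ} (hcol : ∀ j, ∑ i, W i j = 1)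
    (η : ℝ) (A B : Stacked n p) (hAB : rowAvg B = rowAvg A) :
    rowAvg ((lcaMul W η (A, B)).1) = rowAvg A := by
  rw [rowAvg_lca1 hcol, hAB]; module

end AuxRowAvg

section AuxDSMT

variable {n p : ℕ} {Ω : Type} [mΩ : MeasurableSpace Ω] [StandardBorelSpace Ω]
  {μ : MeasureTheory.Measure Ω} [MeasureTheory.IsProbabilityMeasure μ]

lemma aux_xt_avg (S : DSMT n p Ω μ) :
    ∀ k ω, rowAvg ((S.xt k ω).2) = rowAvg ((S.xt k ω).1) := by
  intro k
  induction k with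
  | zero => intro ω; rw [S.hxt0]
  | succ k ih =>
    intro ω
    rw [S.hxt k ω]
    have hAB : rowAvg ((S.xt k ω).2 - S.α • S.y k ω)
        = rowAvg ((S.xt k ω).1 - S.α • S.y k ω) := by
      rw [rowAvg_sub, rowAvg_sub, ih ω]
    show rowAvg ((S.xt k ω).1 - S.α • S.y k ω) = _
    rw [rowAvg_lca1' S.hWcol _ _ _ hAB]

lemma aux_xbar_rec (S : DSMT n p Ω μ) (k : ℕ) (ω : Ω) :
    rowAvg (S.x (k + 1) ω) = rowAvg (S.x k ω) - S.α • rowAvg (S.y k ω) := by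
  rw [S.hx, S.hxt k ω]
  have hAB : rowAvg ((S.xt k ω).2 - S.α • S.y k ω)
      = rowAvg ((S.xt k ω).1 - S.α • S.y k ω) := by
    rw [rowAvg_sub, rowAvg_sub, aux_xt_avg S k ω]
  rw [rowAvg_lca1' S.hWcol _ _ _ hAB, rowAvg_sub, rowAvg_smul, S.hx]

lemma aux_y_avg (S : DSMT n p Ω μ) :
    ∀ k ω, rowAvg ((S.yt k ω).2) = rowAvg ((S.yt k ω).1)
      ∧ rowAvg (S.y k ω) = rowAvg (S.z k ω) := by
  intro k
  induction k with
  | zero =>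
    intro ω
    refine ⟨by rw [S.hyt0], ?_⟩
    rw [S.hy0]
  | succ k ih =>
    intro ω
    have hA : rowAvg ((S.yt k ω).1 + S.z (k + 1) ω - S.z k ω)
        = rowAvg (S.z (k + 1) ω) := by
      rw [rowAvg_sub, rowAvg_add]
      have h1 : rowAvg ((S.yt k ω).1) = rowAvg (S.z k ω) := by
        rw [← S.hy, (ih ω).2]
      rw [h1]; abel
    have hB : rowAvg ((S.yt k ω).2 + S.z (k + 1) ω - S.z k ω)
        = rowAvg ((S.yt k ω).1 + S.z (k + 1) ω - S.z k ω) := by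
      rw [rowAvg_sub, rowAvg_sub, rowAvg_add, rowAvg_add, (ih ω).1]
    constructor
    · rw [S.hyt k ω]
      show rowAvg ((S.yt k ω).1 + S.z (k + 1) ω - S.z k ω) = _
      rw [rowAvg_lca1' S.hWcol _ _ _ hB]
    · rw [S.hy, S.hyt k ω, rowAvg_lca1' S.hWcol _ _ _ hB, hA]

lemma aux_xbar_rec' (S : DSMT n p Ω μ) (k : ℕ) (ω : Ω) :
    rowAvg (S.x (k + 1) ω) = rowAvg (S.x k ω) - S.α • rowAvg (S.z k ω) := by
  rw [aux_xbar_rec S k ω, (aux_y_avg S k ω).2]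

lemma aux_sub (S : DSMT n p Ω μ) (k : ℕ) (ω : Ω) :
    S.xbar k ω - S.dbar k ω = (S.α * S.β / (1 - S.β)) • rowAvg (S.zm k ω) := by
  have h1β : (1 : ℝ) - S.β ≠ 0 := by have := S.hβ1; intro h; linarith
  cases k with
  | zero =>
    show rowAvg (S.x 0 ω) - rowAvg (S.x 0 ω) = _ • rowAvg (0 : Stacked n p)
    rw [rowAvg_zero, smul_zero, sub_self]
  | succ k =>
    show rowAvg (S.x (k + 1) ω)
        - ((1 / (1 - S.β)) • rowAvg (S.x (k + 1) ω) - (S.β / (1 - S.β)) • rowAvg (S.x k ω))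
        = (S.α * S.β / (1 - S.β)) • rowAvg (S.z k ω)
    have h1 : (1 : ℝ) / (1 - S.β) = 1 + S.β / (1 - S.β) := by field_simp; ring
    rw [aux_xbar_rec' S k ω, h1]
    module

end AuxDSMT

section AuxF

open MeasureTheory ENNReal

variable {n p : ℕ} {Ω : Type} [mΩ : MeasurableSpace Ω] [StandardBorelSpace Ω]
  {μ : MeasureTheory.Measure Ω} [MeasureTheory.IsProbabilityMeasure μ]

lemma aux_gradF (S : DSMT n p Ω μ) (v : Vec p) :
    HasGradientAt S.F ((n : ℝ)⁻¹ • ∑ i, gradient (S.f i) v) v := by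
  have h2 : HasFDerivAt (fun u => ∑ i, S.f i u) (∑ i, fderiv ℝ (S.f i) v) v :=
    HasFDerivAt.fun_sum (fun i _ => ((S.hdiff i) v).hasFDerivAt)
  have h1 : HasFDerivAt S.F ((n : ℝ)⁻¹ • ∑ i, fderiv ℝ (S.f i) v) v := h2.const_mul _
  have h3 := hasFDerivAt_iff_hasGradientAt.mp h1
  convert h3 using 1
  rw [_root_.map_smul, map_sum]
  rfl

lemma aux_gradF_eq (S : DSMT n p Ω μ) (v : Vec p) :
    gradient S.F v = (n : ℝ)⁻¹ • ∑ i, gradient (S.f i) v :=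
  (aux_gradF S v).gradient

lemma aux_Fdiff (S : DSMT n p Ω μ) : Differentiable ℝ S.F :=
  fun v => (aux_gradF S v).differentiableAt

lemma aux_Flip (S : DSMT n p Ω μ) (a b : Vec p) :
    ‖gradient S.F a - gradient S.F b‖ ≤ S.L * ‖a - b‖ := by
  rw [aux_gradF_eq, aux_gradF_eq, ← smul_sub, ← Finset.sum_sub_distrib, norm_smul]
  have hn : (0 : ℝ) < n := by exact_mod_cast S.hn
  calc ‖(n : ℝ)⁻¹‖ * ‖∑ i, (gradient (S.f i) a - gradient (S.f i) b)‖
      ≤ (n : ℝ)⁻¹ * ∑ i, ‖gradient (S.f i) a - gradient (S.f i) b‖ := by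
        rw [Real.norm_eq_abs, abs_of_nonneg (by positivity)]
        exact mul_le_mul_of_nonneg_left (norm_sum_le _ _) (by positivity)
    _ ≤ (n : ℝ)⁻¹ * ∑ _i : Fin n, S.L * ‖a - b‖ := by
        refine mul_le_mul_of_nonneg_left ?_ (by positivity)
        exact Finset.sum_le_sum fun i _ => S.hsmooth i a b
    _ = S.L * ‖a - b‖ := by
        rw [Finset.sum_const, Finset.card_univ, Fintype.card_fin, nsmul_eq_mul]
        field_simp

end AuxF

section AuxInt

open MeasureTheory ENNReal

set_option linter.unusedSectionVars false

variable {Ω : Type} [mΩ : MeasurableSpace Ω]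
  {μ : MeasureTheory.Measure Ω} [MeasureTheory.IsProbabilityMeasure μ]
variable {E : Type*} [NormedAddCommGroup E] [InnerProductSpace ℝ E] [CompleteSpace E]

lemma aux_int_sq {v : Ω → E} (hv : MemLp v 2 μ) :
    Integrable (fun ω => ‖v ω‖ ^ 2) μ := by
  have h := hv.integrable_norm_rpow (by norm_num) (by norm_num)
  have he : (2 : ℝ≥0∞).toReal = (2 : ℝ) := by norm_num
  rw [he] at h
  refine h.congr (Filter.Eventually.of_forall fun ω => ?_)
  show ‖v ω‖ ^ (2 : ℝ) = ‖v ω‖ ^ 2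
  rw [show (2 : ℝ) = ((2 : ℕ) : ℝ) by norm_num, Real.rpow_natCast]

lemma aux_integrable_comp {v : Ω → E} (hv : MemLp v 2 μ) {g : E → ℝ} (hg : Continuous g)
    {a b c : ℝ} (hbound : ∀ u, |g u| ≤ a + b * ‖u‖ + c * ‖u‖ ^ 2) :
    Integrable (fun ω => g (v ω)) μ := by
  have h1 : Integrable (fun ω => ‖v ω‖) μ :=
    (memLp_one_iff_integrable.mp (hv.mono_exponent (by norm_num))).norm
  have h2 : Integrable (fun ω => ‖v ω‖ ^ 2) μ := aux_int_sq hv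
  refine Integrable.mono' ((integrable_const a).add ((h1.const_mul b).add (h2.const_mul c)))
    (hg.comp_aestronglyMeasurable hv.aestronglyMeasurable) ?_
  filter_upwards with ω
  simp only [Pi.add_apply]
  rw [Real.norm_eq_abs]
  have := hbound (v ω)
  linarith

end AuxInt

section AuxMem

open MeasureTheory

set_option linter.unusedSectionVars false

variable {n p : ℕ} {Ω : Type} [mΩ : MeasurableSpace Ω] [StandardBorelSpace Ω]
  {μ : MeasureTheory.Measure Ω} [MeasureTheory.IsProbabilityMeasure μ]

lemma aux_mem_rowAvg {X : Ω → Stacked n p} (h : ∀ i, MemLp (fun ω => X ω i) 2 μ) :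
    MemLp (fun ω => rowAvg (X ω)) 2 μ := by
  have hs : MemLp (fun ω => ∑ i, X ω i) 2 μ := memLp_finsetSum _ (fun i _ => h i)
  exact hs.const_smul ((n : ℝ)⁻¹)

lemma aux_mem_z (S : DSMT n p Ω μ) : ∀ k i, MemLp (fun ω => S.z k ω i) 2 μ := by
  intro k
  induction k with
  | zero =>
    intro i
    have he : (fun ω => S.z 0 ω i) = fun ω => (1 - S.β) • S.g 0 ω i :=
      funext fun ω => by rw [S.hz0]; rfl
    rw [he]
    exact (S.hg_L2 0 i).const_smul (1 - S.β)
  | succ k ih =>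
    intro i
    have he : (fun ω => S.z (k + 1) ω i)
        = fun ω => S.β • S.z k ω i + (1 - S.β) • S.g (k + 1) ω i :=
      funext fun ω => by rw [S.hz]; rfl
    rw [he]
    exact ((ih i).const_smul S.β).add ((S.hg_L2 _ i).const_smul (1 - S.β))

lemma aux_mem_xbar (S : DSMT n p Ω μ) (k : ℕ) : MemLp (fun ω => S.xbar k ω) 2 μ :=
  aux_mem_rowAvg (S.hx_L2 k)

lemma aux_mem_zm (S : DSMT n p Ω μ) (k : ℕ) :
    MemLp (fun ω => rowAvg (S.zm k ω)) 2 μ := by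
  cases k with
  | zero =>
    have he : (fun ω => rowAvg (S.zm 0 ω)) = fun _ => (0 : Vec p) :=
      funext fun ω => by show rowAvg (0 : Stacked n p) = 0; exact rowAvg_zero
    rw [he]
    exact memLp_const 0
  | succ k => exact aux_mem_rowAvg (aux_mem_z S k)

lemma aux_mem_dbar (S : DSMT n p Ω μ) (k : ℕ) : MemLp (fun ω => S.dbar k ω) 2 μ := by
  cases k with
  | zero => exact aux_mem_xbar S 0
  | succ k =>
    have he : (fun ω => S.dbar (k + 1) ω)
        = fun ω => (1 / (1 - S.β)) • S.xbar (k + 1) ω - (S.β / (1 - S.β)) • S.xbar k ω :=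
      funext fun ω => rfl
    rw [he]
    exact ((aux_mem_xbar S (k + 1)).const_smul (1 / (1 - S.β))).sub
      ((aux_mem_xbar S k).const_smul (S.β / (1 - S.β)))

lemma aux_int_F (S : DSMT n p Ω μ) {v : Ω → Vec p} (hv : MemLp v 2 μ) :
    Integrable (fun ω => S.F (v ω) - S.Fstar) μ := by
  refine aux_integrable_comp hv (((aux_Fdiff S).continuous).sub continuous_const)
    (a := |S.F 0 - S.Fstar| + ‖gradient S.F 0‖ * 0) (b := ‖gradient S.F 0‖) (c := S.L)
    fun u => ?_
  have hq := quad_upper S.hL.le (aux_Fdiff S) (aux_Flip S) 0 u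
  simp only [sub_zero] at hq
  have hin : |inner (𝕜 := ℝ) (gradient S.F 0) u| ≤ ‖gradient S.F 0‖ * ‖u‖ :=
    abs_real_inner_le_norm _ _
  have h5 : |S.F u - S.F 0| ≤ S.L * ‖u‖ ^ 2 + |inner (𝕜 := ℝ) (gradient S.F 0) u| := by
    calc |S.F u - S.F 0|
        = |(S.F u - S.F 0 - inner (𝕜 := ℝ) (gradient S.F 0) u)
            + inner (𝕜 := ℝ) (gradient S.F 0) u| := by rw [sub_add_cancel]
      _ ≤ |S.F u - S.F 0 - inner (𝕜 := ℝ) (gradient S.F 0) u|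
            + |inner (𝕜 := ℝ) (gradient S.F 0) u| := abs_add_le _ _
      _ ≤ S.L * ‖u‖ ^ 2 + |inner (𝕜 := ℝ) (gradient S.F 0) u| := by linarith
  have h6 : |S.F u - S.Fstar| ≤ |S.F u - S.F 0| + |S.F 0 - S.Fstar| := abs_sub_le _ _ _
  simp only [Pi.sub_apply]
  linarith

lemma aux_int_grad (S : DSMT n p Ω μ) {v : Ω → Vec p} (hv : MemLp v 2 μ) :
    Integrable (fun ω => ‖gradient S.F (v ω)‖ ^ 2) μ := by
  have hgc : Continuous (fun u => gradient S.F u) := grad_cont S.hL.le (aux_Flip S)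
  refine aux_integrable_comp hv ((hgc.norm).pow 2)
    (a := 2 * ‖gradient S.F 0‖ ^ 2 + 0 * 0) (b := 0) (c := 2 * S.L ^ 2) fun u => ?_
  have h1 : ‖gradient S.F u - gradient S.F 0‖ ≤ S.L * ‖u‖ := by
    have := aux_Flip S u 0
    simpa using this
  have h2 : ‖gradient S.F u‖ ≤ ‖gradient S.F 0‖ + S.L * ‖u‖ := by
    have := norm_sub_norm_le (gradient S.F u) (gradient S.F 0)
    linarith
  simp only [Pi.pow_apply]
  rw [abs_of_nonneg (by positivity)]
  have hnn : (0 : ℝ) ≤ ‖gradient S.F 0‖ + S.L * ‖u‖ :=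
    add_nonneg (norm_nonneg _) (mul_nonneg S.hL.le (norm_nonneg _))
  nlinarith [sq_nonneg (‖gradient S.F 0‖ - S.L * ‖u‖),
    mul_le_mul h2 h2 (norm_nonneg _) hnn]

end AuxMem

/-- Lemma 4 in the paper: relating `E[f(x̄ₖ) − f^*]` to `E[f(d̄ₖ) − f^*]`. -/
theorem dsmt_fx_fd {n p : ℕ} {Ω : Type} [MeasurableSpace Ω] [StandardBorelSpace Ω]
    {μ : MeasureTheory.Measure Ω} [MeasureTheory.IsProbabilityMeasure μ]
    (S : DSMT n p Ω μ)
    (hstep : S.α ≤ (1 - S.β) / (3 * S.β * S.L)) :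
    ∀ k : ℕ,
      S.Efx k ≤ S.Efd k + (S.α * S.β / (1 - S.β)) * S.Egrad k
        + (S.α * S.β / (1 - S.β)) * S.Ezm k := by
  intro k
  have h1β : (0 : ℝ) < 1 - S.β := by linarith [S.hβ1]
  set c : ℝ := S.α * S.β / (1 - S.β) with hc
  have hc0 : 0 ≤ c := div_nonneg (mul_nonneg S.hα.le S.hβ0.le) h1β.le
  have hLc : S.L * c ≤ 1 / 3 := by
    have hβL : (0 : ℝ) < S.β * S.L := mul_pos S.hβ0 S.hL
    have hβne : S.β ≠ 0 := S.hβ0.ne'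
    have hLne : S.L ≠ 0 := S.hL.ne'
    have h3 : S.α * (S.β * S.L) ≤ (1 - S.β) / 3 := by
      have h4 := mul_le_mul_of_nonneg_right hstep hβL.le
      have h5 : (1 - S.β) / (3 * S.β * S.L) * (S.β * S.L) = (1 - S.β) / 3 := by
        field_simp
      rw [h5] at h4
      exact h4
    have h7 : S.L * c = S.α * (S.β * S.L) / (1 - S.β) := by rw [hc]; ring
    rw [h7, div_le_iff₀ h1β]
    linarith
  -- pointwise inequality
  have hpt : ∀ ω, S.F (S.xbar k ω) - S.Fstar
      ≤ (S.F (S.dbar k ω) - S.Fstar)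
        + (c * ‖gradient S.F (S.xbar k ω)‖ ^ 2 + c * ‖rowAvg (S.zm k ω)‖ ^ 2) := by
    intro ω
    have hsub := aux_sub S k ω
    have hq := quad_upper S.hL.le (aux_Fdiff S) (aux_Flip S) (S.xbar k ω) (S.dbar k ω)
    set G := gradient S.F (S.xbar k ω) with hG
    set zb := rowAvg (S.zm k ω) with hzb
    have hdx : S.dbar k ω - S.xbar k ω = -(c • zb) := by
      rw [← hsub]; abel
    rw [hdx] at hq
    have hin1 : inner (𝕜 := ℝ) G (-(c • zb)) = -(c * inner (𝕜 := ℝ) G zb) := by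
      rw [inner_neg_right, real_inner_smul_right]
    have hnrm : ‖-(c • zb)‖ ^ 2 = c ^ 2 * ‖zb‖ ^ 2 := by
      rw [norm_neg, norm_smul, Real.norm_eq_abs, abs_of_nonneg hc0, mul_pow]
    rw [hin1, hnrm] at hq
    have hlow := (abs_le.mp hq).1
    have hin2 : inner (𝕜 := ℝ) G zb ≤ ‖G‖ * ‖zb‖ := real_inner_le_norm G zb
    have e1 : c * inner (𝕜 := ℝ) G zb ≤ c * (‖G‖ * ‖zb‖) :=
      mul_le_mul_of_nonneg_left hin2 hc0
    have e2 : S.L * (c ^ 2 * ‖zb‖ ^ 2) ≤ (1 / 3) * (c * ‖zb‖ ^ 2) := by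
      nlinarith [sq_nonneg ‖zb‖, hc0, hLc, mul_nonneg hc0 (sq_nonneg ‖zb‖)]
    nlinarith [sq_nonneg (‖G‖ - ‖zb‖), mul_nonneg hc0 (sq_nonneg (‖G‖ - ‖zb‖)),
      norm_nonneg zb, norm_nonneg G]
  -- integrability
  have hI1 : MeasureTheory.Integrable (fun ω => S.F (S.xbar k ω) - S.Fstar) μ :=
    aux_int_F S (aux_mem_xbar S k)
  have hI2 : MeasureTheory.Integrable (fun ω => S.F (S.dbar k ω) - S.Fstar) μ :=
    aux_int_F S (aux_mem_dbar S k)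
  have hI3 : MeasureTheory.Integrable (fun ω => ‖gradient S.F (S.xbar k ω)‖ ^ 2) μ :=
    aux_int_grad S (aux_mem_xbar S k)
  have hI4 : MeasureTheory.Integrable (fun ω => ‖rowAvg (S.zm k ω)‖ ^ 2) μ :=
    aux_int_sq (aux_mem_zm S k)
  have hI34 : MeasureTheory.Integrable
      (fun ω => c * ‖gradient S.F (S.xbar k ω)‖ ^ 2 + c * ‖rowAvg (S.zm k ω)‖ ^ 2) μ :=
    (hI3.const_mul c).add (hI4.const_mul c)
  have hmain : S.Efx k ≤ ∫ ω, ((S.F (S.dbar k ω) - S.Fstar)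
      + (c * ‖gradient S.F (S.xbar k ω)‖ ^ 2 + c * ‖rowAvg (S.zm k ω)‖ ^ 2)) ∂μ := by
    exact MeasureTheory.integral_mono hI1 (hI2.add hI34) hpt
  have hsplit : (∫ ω, ((S.F (S.dbar k ω) - S.Fstar)
      + (c * ‖gradient S.F (S.xbar k ω)‖ ^ 2 + c * ‖rowAvg (S.zm k ω)‖ ^ 2)) ∂μ)
      = S.Efd k + (c * S.Egrad k + c * S.Ezm k) := by
    rw [MeasureTheory.integral_add hI2 hI34,
      MeasureTheory.integral_add (hI3.const_mul c) (hI4.const_mul c),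
      MeasureTheory.integral_const_mul, MeasureTheory.integral_const_mul]
    rfl
  rw [hsplit] at hmain
  linarith
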